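/- Let G ⊆ ℂ^n be a domain such that the family 𝒪(Δ, G) of holomorphic maps from the open unit disc Δ ⊆ ℂ into G is a normal family (i.e. G is taut). Then for every m ≥ 1 and every domain D ⊆ ℂ^m, the family 𝒪(D, G) of holomorphic maps from D into G is a normal family: every sequence {f_j}_{j≥1} of holomorphic maps f_j : D → G admits either a subsequence converging uniformly on compact subsets of D to a holomorphic map f : D → G, or a subsequence that is compactly divergent on D. -/

import Mathlib

open Filter Topology Set

/-- A sequence of maps `f j : E → F`, viewed as maps from `D` into `G`, is compactly
divergent on `D` if for all compacts `K ⊆ D` and `L ⊆ G`, eventually `f j '' K ∩ L = ∅`. -/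
def CompactlyDivergent {E F : Type*} [TopologicalSpace E] [TopologicalSpace F]
    (f : ℕ → E → F) (D : Set E) (G : Set F) : Prop :=
  ∀ K : Set E, K ⊆ D → IsCompact K → ∀ L : Set F, L ⊆ G → IsCompact L →
    ∃ j₀ : ℕ, ∀ j ≥ j₀, Disjoint (f j '' K) L

/-- The family `𝒪(D, G)` of holomorphic maps from `D` into `G` is a normal family: every
sequence of holomorphic maps `D → G` contains a subsequence converging uniformly on compact
subsets of `D` to a holomorphic map `D → G`, or a compactly divergent subsequence. -/
def IsNormalFamilyO {E F : Type*} [NormedAddCommGroup E] [NormedSpace ℂ E]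
    [NormedAddCommGroup F] [NormedSpace ℂ F] (D : Set E) (G : Set F) : Prop :=
  ∀ f : ℕ → E → F, (∀ j, DifferentiableOn ℂ (f j) D ∧ Set.MapsTo (f j) D G) →
    ∃ φ : ℕ → ℕ, StrictMono φ ∧
      ((∃ g : E → F, DifferentiableOn ℂ g D ∧ Set.MapsTo g D G ∧
          ∀ K : Set E, K ⊆ D → IsCompact K →
            TendstoUniformlyOn (fun k => f (φ k)) g Filter.atTop K) ∨
        CompactlyDivergent (fun k => f (φ k)) D G)

section Auxiliary

open Metric
open scoped ENNReal

lemma exists_exhaustion {N : ℕ} (Ω : Set (Fin N → ℂ)) (hΩ : IsOpen Ω) :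
    ∃ K : ℕ → Set (Fin N → ℂ), Monotone K ∧ (∀ i, IsCompact (K i)) ∧ (∀ i, K i ⊆ Ω) ∧
      ∀ C : Set (Fin N → ℂ), C ⊆ Ω → IsCompact C → ∃ i, C ⊆ K i := by
  classical
  set a : ℝ≥0∞ := 1/2 with ha
  have ha0 : 0 < a := by norm_num [ha]
  have ha1 : a < 1 := by norm_num [ha]
  set K : ℕ → Set (Fin N → ℂ) :=
    fun i => closedBall 0 i ∩ {x | a ^ i ≤ EMetric.infEdist x Ωᶜ} with hK
  have hKsub : ∀ i, K i ⊆ Ω := by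
    intro i x hx
    by_contra h
    have h0 : EMetric.infEdist x Ωᶜ = 0 := EMetric.infEdist_zero_of_mem h
    have := hx.2
    rw [mem_setOf_eq, h0, le_zero_iff] at this
    exact (ENNReal.pow_pos ha0 i).ne' this
  refine ⟨K, ?_, ?_, hKsub, ?_⟩
  · intro i j hij x hx
    refine ⟨closedBall_subset_closedBall (by exact_mod_cast hij) hx.1, ?_⟩
    exact le_trans (pow_le_pow_right_of_le_one' ha1.le hij) hx.2
  · intro i
    exact (isCompact_closedBall 0 i).inter_right
      (IsClosed.preimage EMetric.continuous_infEdist isClosed_Ici)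
  · intro C hCΩ hC
    rcases C.eq_empty_or_nonempty with rfl | hne
    · exact ⟨0, empty_subset _⟩
    obtain ⟨R, hR⟩ := hC.isBounded.subset_closedBall 0
    obtain ⟨n₁, hn₁⟩ := exists_nat_ge R
    obtain ⟨x₀, hx₀C, hmin⟩ := hC.exists_isMinOn hne EMetric.continuous_infEdist.continuousOn
    have hpos : 0 < EMetric.infEdist x₀ Ωᶜ := by
      show 0 < Metric.infEDist x₀ Ωᶜ
      rw [Metric.infEDist_pos_iff_notMem_closure, hΩ.isClosed_compl.closure_eq]
      exact fun h => h (hCΩ hx₀C)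
    have htend : Tendsto (fun n : ℕ => a ^ n) atTop (𝓝 0) :=
      ENNReal.tendsto_pow_atTop_nhds_zero_of_lt_one ha1
    obtain ⟨n₂, hn₂⟩ := ((tendsto_order.1 htend).2 _ hpos).exists
    refine ⟨max n₁ n₂, fun x hx => ⟨?_, ?_⟩⟩
    · exact closedBall_subset_closedBall (hn₁.trans (by exact_mod_cast le_max_left n₁ n₂)) (hR hx)
    · refine le_trans (le_trans (pow_le_pow_right_of_le_one' ha1.le (le_max_right n₁ n₂)) hn₂.le) ?_
      exact hmin hx

/-- Lemma A: tautness implies a uniform bound on half-discs. -/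
lemma lemA {n : ℕ} {G : Set (Fin n → ℂ)} (hGopen : IsOpen G)
    (htaut : IsNormalFamilyO (Metric.ball (0 : ℂ) 1) G)
    (L : Set (Fin n → ℂ)) (hL : IsCompact L) (hLG : L ⊆ G) :
    ∃ L' : Set (Fin n → ℂ), IsCompact L' ∧ L' ⊆ G ∧
      ∀ h : ℂ → (Fin n → ℂ), DifferentiableOn ℂ h (ball (0:ℂ) 1) →
        MapsTo h (ball (0:ℂ) 1) G → h 0 ∈ L →
        ∀ z ∈ closedBall (0:ℂ) (1/2), h z ∈ L' := by
  classical
  by_contra hcon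
  push_neg at hcon
  obtain ⟨E, hEmono, hEcomp, hEsub, hEabs⟩ := exists_exhaustion G hGopen
  set L' : ℕ → Set (Fin n → ℂ) := fun k => E k ∪ L with hL'
  have hL'comp : ∀ k, IsCompact (L' k) := fun k => (hEcomp k).union hL
  have hL'sub : ∀ k, L' k ⊆ G := fun k => union_subset (hEsub k) hLG
  have hL'mono : Monotone L' := fun i j hij => union_subset_union_left L (hEmono hij)
  choose h hd hm h0 z hz hznot using fun k => hcon (L' k) (hL'comp k) (hL'sub k)
  obtain ⟨φ, hφ, hcase⟩ := htaut h (fun k => ⟨hd k, hm k⟩)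
  rcases hcase with ⟨g, hgd, hgm, hgu⟩ | hdiv
  · -- uniform convergence case
    have hsub : closedBall (0:ℂ) (1/2) ⊆ ball (0:ℂ) 1 :=
      closedBall_subset_ball (by norm_num)
    have hKc : IsCompact (closedBall (0:ℂ) (1/2)) := isCompact_closedBall _ _
    have hC : IsCompact (g '' closedBall (0:ℂ) (1/2)) := hKc.image_of_continuousOn
      ((hgd.continuousOn).mono hsub)
    have hCG : g '' closedBall (0:ℂ) (1/2) ⊆ G := fun y ⟨x, hx, hxy⟩ => hxy ▸ hgm (hsub hx)
    obtain ⟨δ, hδ0, hδ⟩ := hC.exists_cthickening_subset_open hGopen hCG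
    have hT : IsCompact (cthickening δ (g '' closedBall (0:ℂ) (1/2))) := hC.cthickening
    obtain ⟨k₀, hk₀⟩ := hEabs _ hδ hT
    have := hgu _ hsub hKc
    rw [Metric.tendstoUniformlyOn_iff] at this
    obtain ⟨k₁, hk₁⟩ := (this δ hδ0).exists_forall_of_atTop
    set j := max k₀ k₁ with hj
    have h1 : dist (g (z (φ j))) (h (φ j) (z (φ j))) < δ :=
      hk₁ j (le_max_right _ _) _ (hz (φ j))
    have h2 : h (φ j) (z (φ j)) ∈ cthickening δ (g '' closedBall (0:ℂ) (1/2)) := by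
      refine mem_cthickening_of_dist_le _ _ δ _ (mem_image_of_mem g (hz (φ j))) ?_
      rw [dist_comm] at h1
      exact h1.le
    have h3 : h (φ j) (z (φ j)) ∈ L' (φ j) := by
      apply hL'mono (le_trans (le_max_left k₀ k₁ : k₀ ≤ j) (hφ.le_apply))
      exact Or.inl (hk₀ h2)
    exact hznot (φ j) h3
  · obtain ⟨j₀, hj₀⟩ := hdiv {0} (singleton_subset_iff.2 (mem_ball_self one_pos)) isCompact_singleton
      L hLG hL
    exact (hj₀ j₀ le_rfl).le_bot ⟨⟨0, rfl, rfl⟩, h0 (φ j₀)⟩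

/-- Cauchy/Schwarz estimate: bound on `fderiv` from a bound on the function. -/
lemma fderiv_bound {E F : Type*} [NormedAddCommGroup E] [NormedSpace ℂ E]
    [NormedAddCommGroup F] [NormedSpace ℂ F] {u : E → F} {q : E} {ρ c : ℝ}
    (hρ : 0 < ρ) (hu : DifferentiableOn ℂ u (ball q ρ))
    (hmaps : MapsTo u (ball q ρ) (ball (u q) c)) : ‖fderiv ℂ u q‖ ≤ c / ρ := by
  have hc : 0 < c := by
    have := mem_ball.mp (hmaps (mem_ball_self hρ)); simpa using this
  refine ContinuousLinearMap.opNorm_le_bound _ (div_nonneg hc.le hρ.le) fun w => ?_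
  rcases eq_or_ne w 0 with rfl | hw
  · simp
  have hw0 : 0 < ‖w‖ := norm_pos_iff.2 hw
  set h : ℂ → F := fun z => u (q + z • w) with hh
  have hlinemaps : ∀ z : ℂ, z ∈ ball (0:ℂ) (ρ/‖w‖) → q + z • w ∈ ball q ρ := by
    intro z hz
    rw [mem_ball] at hz ⊢
    rw [dist_eq_norm, add_sub_cancel_left, norm_smul]
    calc ‖z‖ * ‖w‖ < (ρ/‖w‖) * ‖w‖ := by
          apply mul_lt_mul_of_pos_right _ hw0
          simpa [dist_eq_norm] using hz
      _ = ρ := by field_simp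
  have hline : Differentiable ℂ (fun z : ℂ => q + z • w) :=
    (differentiable_id.smul_const w).const_add q
  have hhd : DifferentiableOn ℂ h (ball (0:ℂ) (ρ/‖w‖)) :=
    hu.comp hline.differentiableOn hlinemaps
  have hh0 : h 0 = u q := by simp [hh]
  have hhm : MapsTo h (ball (0:ℂ) (ρ/‖w‖)) (ball (h 0) c) := by
    rw [hh0]; exact fun z hz => hmaps (hlinemaps z hz)
  have hlder : HasDerivAt (fun z : ℂ => q + z • w) w 0 := by
    simpa using (((hasDerivAt_id (0:ℂ)).smul_const w).const_add q)
  have hder : HasDerivAt h (fderiv ℂ u q w) 0 := by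
    have hdiff : DifferentiableAt ℂ u q :=
      (hu q (mem_ball_self hρ)).differentiableAt (isOpen_ball.mem_nhds (mem_ball_self hρ))
    have h1 : HasFDerivAt u (fderiv ℂ u q) (q + (0:ℂ) • w) := by
      simpa using hdiff.hasFDerivAt
    exact h1.comp_hasDerivAt (0:ℂ) hlder
  have hest := Complex.norm_deriv_le_div_of_mapsTo_ball hhd (hhm.mono_right ball_subset_closedBall) (div_pos hρ hw0)
  rw [hder.deriv] at hest
  calc ‖fderiv ℂ u q w‖ ≤ c / (ρ / ‖w‖) := hest
    _ = c / ρ * ‖w‖ := by field_simp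

variable {n m : ℕ} {G : Set (Fin n → ℂ)}

/-- transfer of the half-disc bound to balls in ℂ^m, given the conclusion of lemA -/
lemma ballBound {L L' : Set (Fin n → ℂ)}
    (hlem : ∀ h : ℂ → (Fin n → ℂ), DifferentiableOn ℂ h (ball (0:ℂ) 1) →
        MapsTo h (ball (0:ℂ) 1) G → h 0 ∈ L →
        ∀ z ∈ closedBall (0:ℂ) (1/2), h z ∈ L')
    (f : (Fin m → ℂ) → (Fin n → ℂ)) (p : Fin m → ℂ) {R : ℝ} (hR : 0 < R)
    (hf : DifferentiableOn ℂ f (ball p R)) (hfm : MapsTo f (ball p R) G)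
    (hfp : f p ∈ L) : ∀ q ∈ closedBall p (R/2), f q ∈ L' := by
  intro q hq
  set w : Fin m → ℂ := (2:ℂ) • (q - p) with hwdef
  have hwnorm : ‖w‖ ≤ R := by
    rw [hwdef, norm_smul]
    have : ‖q - p‖ ≤ R / 2 := by
      rw [← dist_eq_norm]; exact mem_closedBall.mp hq
    calc ‖(2:ℂ)‖ * ‖q - p‖ = 2 * ‖q - p‖ := by norm_num
      _ ≤ 2 * (R/2) := by linarith
      _ = R := by ring
  have hlinemaps : ∀ z : ℂ, z ∈ ball (0:ℂ) 1 → p + z • w ∈ ball p R := by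
    intro z hz
    rw [mem_ball] at hz ⊢
    rw [dist_eq_norm, add_sub_cancel_left, norm_smul]
    have hz1 : ‖z‖ < 1 := by simpa [dist_eq_norm] using hz
    calc ‖z‖ * ‖w‖ ≤ ‖z‖ * R := by
          exact mul_le_mul_of_nonneg_left hwnorm (norm_nonneg z)
      _ < 1 * R := mul_lt_mul_of_pos_right hz1 hR
      _ = R := one_mul R
  set h : ℂ → (Fin n → ℂ) := fun z => f (p + z • w) with hh
  have hline : Differentiable ℂ (fun z : ℂ => p + z • w) :=
    (differentiable_id.smul_const w).const_add p
  have hhd : DifferentiableOn ℂ h (ball (0:ℂ) 1) :=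
    hf.comp hline.differentiableOn hlinemaps
  have hhm : MapsTo h (ball (0:ℂ) 1) G := fun z hz => hfm (hlinemaps z hz)
  have hh0 : h 0 ∈ L := by simpa [hh] using hfp
  have key := hlem h hhd hhm hh0 (1/2 : ℂ) (by
    rw [mem_closedBall, dist_eq_norm, sub_zero]
    norm_num)
  have : h (1/2 : ℂ) = f q := by
    show f (p + (1/2 : ℂ) • w) = f q
    congr 1
    rw [hwdef, smul_smul]
    norm_num
  rwa [this] at key


lemma subseq_select {S : ℕ → Set ℕ} (hS : ∀ i, (S i).Infinite) :
    ∃ φ : ℕ → ℕ, StrictMono φ ∧ ∀ i, φ i ∈ S i := by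
  classical
  have step : ∀ i (a : ℕ), ∃ b ∈ S i, a < b := fun i a => (hS i).exists_gt a
  choose b hb hlt using step
  set φ : ℕ → ℕ := fun i => Nat.rec (b 0 0) (fun i p => b (i+1) p) i with hφ
  refine ⟨φ, strictMono_nat_of_lt_succ fun i => hlt (i+1) (φ i), fun i => ?_⟩
  cases i with
  | zero => exact hb 0 0
  | succ i => exact hb (i+1) (φ i)

lemma diag_extract {X : Type*} [TopologicalSpace X] (x : ℕ → ℕ → X) (Q : ℕ → Prop)
    (h : ∀ i, Q i → ∀ u : ℕ → ℕ, StrictMono u →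
      ∃ v : ℕ → ℕ, StrictMono v ∧ ∃ a : X, Tendsto (fun k => x i (u (v k))) atTop (𝓝 a)) :
    ∃ θ : ℕ → ℕ, StrictMono θ ∧ ∀ i, Q i → ∃ a : X, Tendsto (fun k => x i (θ k)) atTop (𝓝 a) := by
  classical
  choose v hv a ha using h
  set step : ∀ _ : ℕ, {f : ℕ → ℕ // StrictMono f} → {f : ℕ → ℕ // StrictMono f} :=
    fun i p => if hQ : Q i then ⟨v i hQ p.1 p.2, hv i hQ p.1 p.2⟩
      else ⟨id, strictMono_id⟩ with hstep
  set u : ℕ → {f : ℕ → ℕ // StrictMono f} :=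
    fun i => Nat.rec ⟨id, strictMono_id⟩
      (fun i p => ⟨p.1 ∘ (step i p).1, p.2.comp (step i p).2⟩) i with hu
  have hu_succ : ∀ i, (u (i+1)).1 = (u i).1 ∘ (step i (u i)).1 := fun i => rfl
  set W : ∀ _ : ℕ, ℕ → {f : ℕ → ℕ // StrictMono f} :=
    fun i j => Nat.rec ⟨id, strictMono_id⟩
      (fun j p => ⟨p.1 ∘ (step (i+j) (u (i+j))).1, p.2.comp (step (i+j) (u (i+j))).2⟩) j with hW
  have hWu : ∀ i j, (u (i+j)).1 = (u i).1 ∘ (W i j).1 := by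
    intro i j
    induction j with
    | zero => rfl
    | succ j ih =>
      show (u ((i+j)+1)).1 = _
      rw [hu_succ, ih]
      rfl
  set θ : ℕ → ℕ := fun k => (u k).1 k with hθ
  have hθmono : StrictMono θ := by
    apply strictMono_nat_of_lt_succ
    intro k
    calc (u k).1 k < (u k).1 (k+1) := (u k).2 (Nat.lt_succ_self k)
      _ ≤ (u k).1 ((step k (u k)).1 (k+1)) := (u k).2.monotone ((step k (u k)).2.le_apply)
      _ = θ (k+1) := rfl
  refine ⟨θ, hθmono, fun i hQ => ?_⟩
  -- the limit at stage i+1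
  have hstep_eq : (step i (u i)).1 = v i hQ (u i).1 (u i).2 := by
    rw [hstep]; simp only [dif_pos hQ]
  have hT : Tendsto (fun k => x i ((u (i+1)).1 k)) atTop (𝓝 (a i hQ (u i).1 (u i).2)) := by
    have := ha i hQ (u i).1 (u i).2
    convert this using 2 with k
    rw [hu_succ, Function.comp_apply, hstep_eq]
  refine ⟨a i hQ (u i).1 (u i).2, ?_⟩
  set m : ℕ → ℕ := fun k => (W (i+1) (k - (i+1))).1 k with hm
  have hmk : ∀ k, k ≤ m k := fun k => (W (i+1) (k - (i+1))).2.le_apply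
  have hmt : Tendsto m atTop atTop := tendsto_atTop_mono hmk tendsto_id
  have hcomp : Tendsto (fun k => x i ((u (i+1)).1 (m k))) atTop
      (𝓝 (a i hQ (u i).1 (u i).2)) := hT.comp hmt
  apply hcomp.congr'
  filter_upwards [eventually_ge_atTop (i+1)] with k hk
  have hik : (i+1) + (k - (i+1)) = k := Nat.add_sub_cancel' hk
  calc x i ((u (i+1)).1 (m k)) = x i ((u ((i+1) + (k - (i+1)))).1 k) := by rw [hWu]; rfl
    _ = x i (θ k) := by rw [hik]

lemma local_bound {n m : ℕ} {G : Set (Fin n → ℂ)} {D : Set (Fin m → ℂ)}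
    (hDopen : IsOpen D) (hDconn : IsConnected D)
    (oracle : ∀ L : Set (Fin n → ℂ), IsCompact L → L ⊆ G →
      ∃ L', IsCompact L' ∧ L' ⊆ G ∧
        ∀ (f : (Fin m → ℂ) → (Fin n → ℂ)) (p : Fin m → ℂ) (R : ℝ), 0 < R →
          DifferentiableOn ℂ f (ball p R) → MapsTo f (ball p R) G → f p ∈ L →
          ∀ q ∈ closedBall p (R/2), f q ∈ L')
    (F : ℕ → (Fin m → ℂ) → (Fin n → ℂ)) (hFd : ∀ j, DifferentiableOn ℂ (F j) D)
    (hFm : ∀ j, MapsTo (F j) D G)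
    (x₀ : Fin m → ℂ) (hx₀ : x₀ ∈ D) (L₀ : Set (Fin n → ℂ)) (hL₀c : IsCompact L₀)
    (hL₀G : L₀ ⊆ G) (hx₀L : ∀ j, F j x₀ ∈ L₀) :
    ∀ p ∈ D, ∃ r > 0, ball p r ⊆ D ∧ ∃ L', IsCompact L' ∧ L' ⊆ G ∧
      ∀ j, ∀ q ∈ ball p r, F j q ∈ L' := by
  classical
  set U : Set (Fin m → ℂ) := {p | ∃ r > 0, ball p r ⊆ D ∧ ∃ L', IsCompact L' ∧ L' ⊆ G ∧
      ∀ j, ∀ q ∈ ball p r, F j q ∈ L'} with hU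
  have hUopen : IsOpen U := by
    rw [Metric.isOpen_iff]
    rintro p ⟨r, hr, hrD, L', hL'c, hL'G, hL'⟩
    refine ⟨r/2, by linarith, fun p' hp' => ⟨r/2, by linarith, ?_, L', hL'c, hL'G, ?_⟩⟩
    · intro x hx
      apply hrD
      rw [mem_ball] at *
      calc dist x p ≤ dist x p' + dist p' p := dist_triangle _ _ _
        _ < r/2 + r/2 := add_lt_add hx hp'
        _ = r := by ring
    · intro j q hq
      apply hL' j
      rw [mem_ball] at *
      calc dist q p ≤ dist q p' + dist p' p := dist_triangle _ _ _
        _ < r/2 + r/2 := add_lt_add hq hp'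
        _ = r := by ring
  have seed : ∀ p ∈ D, ∀ L : Set (Fin n → ℂ), IsCompact L → L ⊆ G → (∀ j, F j p ∈ L) →
      p ∈ U := by
    intro p hp L hLc hLG hpL
    obtain ⟨ε, hε, hballD⟩ := Metric.isOpen_iff.mp hDopen p hp
    obtain ⟨L', hL'c, hL'G, hor⟩ := oracle L hLc hLG
    refine ⟨ε/2, by linarith, fun x hx => hballD (ball_subset_ball (by linarith) hx),
      L', hL'c, hL'G, fun j q hq => ?_⟩
    exact hor (F j) p ε hε ((hFd j).mono hballD) ((hFm j).mono_left hballD) (hpL j)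
      q (ball_subset_closedBall hq)
  have hclosure : ∀ p ∈ D, p ∈ closure (D ∩ U) → p ∈ U := by
    intro p hp hpc
    obtain ⟨ε, hε, hballD⟩ := Metric.isOpen_iff.mp hDopen p hp
    rw [Metric.mem_closure_iff] at hpc
    obtain ⟨q, ⟨hqD, hqU⟩, hdq⟩ := hpc (ε/8) (by linarith)
    obtain ⟨r, hr, hrD, L, hLc, hLG, hval⟩ := hqU
    have hqball : ∀ j, F j q ∈ L := fun j => hval j q (mem_ball_self hr)
    obtain ⟨L', hL'c, hL'G, hor⟩ := oracle L hLc hLG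
    have hqp : dist q p < ε/8 := by rw [dist_comm]; exact hdq
    have hball2 : ball q (ε/2) ⊆ D := by
      intro x hx
      apply hballD
      rw [mem_ball] at *
      calc dist x p ≤ dist x q + dist q p := dist_triangle _ _ _
        _ < ε/2 + ε/8 := add_lt_add hx hqp
        _ < ε := by linarith
    refine ⟨ε/8, by linarith, fun x hx => hballD (ball_subset_ball (by linarith) hx),
      L', hL'c, hL'G, fun j x hx => ?_⟩
    refine hor (F j) q (ε/2) (by linarith) ((hFd j).mono hball2) ((hFm j).mono_left hball2)
      (hqball j) x ?_
    rw [mem_closedBall]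
    calc dist x q ≤ dist x p + dist p q := dist_triangle _ _ _
      _ ≤ ε/8 + ε/8 := by
          rw [mem_ball] at hx
          rw [dist_comm] at hqp
          exact add_le_add hx.le hqp.le
      _ ≤ ε/2/2 := by linarith
  have hDU : D ⊆ U := by
    intro p hp
    by_cases hc : p ∈ closure (D ∩ U)
    · exact hclosure p hp hc
    · exfalso
      have hpre := hDconn.isPreconnected
      obtain ⟨x, hxD, hxU, hxv⟩ := hpre U (closure (D ∩ U))ᶜ hUopen
        isClosed_closure.isOpen_compl
        (fun y hy => by
          by_cases hyc : y ∈ closure (D ∩ U)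
          · exact Or.inl (hclosure y hy hyc)
          · exact Or.inr hyc)
        ⟨x₀, hx₀, seed x₀ hx₀ L₀ hL₀c hL₀G hx₀L⟩ ⟨p, hp, hc⟩
      exact hxv (subset_closure ⟨hxD, hxU⟩)
  exact fun p hp => hDU hp

/-- local Lipschitz bound from local boundedness -/
lemma lip_local {n m : ℕ} {D : Set (Fin m → ℂ)} (hDopen : IsOpen D)
    {F : ℕ → (Fin m → ℂ) → (Fin n → ℂ)} (hFd : ∀ j, DifferentiableOn ℂ (F j) D)
    {p : Fin m → ℂ} {r : ℝ} {L' : Set (Fin n → ℂ)} (hr : 0 < r) (hrD : ball p r ⊆ D)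
    (hL'c : IsCompact L') (hbd : ∀ j, ∀ q ∈ ball p r, F j q ∈ L') :
    ∃ C ≥ 0, ∀ j, ∀ q ∈ ball p (r/2), ∀ q' ∈ ball p (r/2),
      ‖F j q - F j q'‖ ≤ C * ‖q - q'‖ := by
  obtain ⟨M, hM⟩ := hL'c.isBounded.exists_norm_le
  have hM0 : 0 ≤ M := by
    obtain ⟨q, hq⟩ : (ball p r).Nonempty := nonempty_ball.2 hr
    exact (norm_nonneg _).trans (hM _ (hbd 0 q hq))
  set C : ℝ := (2*M+1)/(r/2) with hC
  have hC0 : 0 ≤ C := div_nonneg (by linarith) (by linarith)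
  refine ⟨C, hC0, fun j q hq q' hq' => ?_⟩
  have hdiff : ∀ x ∈ ball p (r/2), DifferentiableAt ℂ (F j) x := by
    intro x hx
    have hxD : x ∈ D := hrD (ball_subset_ball (by linarith) hx)
    exact (hFd j x hxD).differentiableAt (hDopen.mem_nhds hxD)
  have hbound : ∀ x ∈ ball p (r/2), ‖fderiv ℂ (F j) x‖ ≤ C := by
    intro x hx
    have hsub : ball x (r/2) ⊆ ball p r := by
      intro y hy
      rw [mem_ball] at *
      calc dist y p ≤ dist y x + dist x p := dist_triangle _ _ _
        _ < r/2 + r/2 := add_lt_add hy hx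
        _ = r := by ring
    have h1 : DifferentiableOn ℂ (F j) (ball x (r/2)) :=
      ((hFd j).mono (hsub.trans hrD))
    have h2 : MapsTo (F j) (ball x (r/2)) (ball (F j x) (2*M+1)) := by
      intro y hy
      rw [mem_ball, dist_eq_norm]
      calc ‖F j y - F j x‖ ≤ ‖F j y‖ + ‖F j x‖ := norm_sub_le _ _
        _ ≤ M + M := add_le_add (hM _ (hbd j y (hsub hy)))
            (hM _ (hbd j x (ball_subset_ball (by linarith) hx)))
        _ < 2*M+1 := by linarith
    exact fderiv_bound (by linarith) h1 h2
  exact (convex_ball p (r/2)).norm_image_sub_le_of_norm_fderiv_le hdiff hbound hq' hq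

/-- uniform Cauchy on compacts from local Lipschitz + pointwise convergence on a dense set -/
lemma unif_cauchy {n m : ℕ} {D : Set (Fin m → ℂ)}
    {F : ℕ → (Fin m → ℂ) → (Fin n → ℂ)}
    (hlip : ∀ p ∈ D, ∃ r > 0, ball p r ⊆ D ∧ ∃ C ≥ (0:ℝ), ∀ j, ∀ q ∈ ball p r,
      ∀ q' ∈ ball p r, ‖F j q - F j q'‖ ≤ C * ‖q - q'‖)
    {d : ℕ → Fin m → ℂ} (hd : DenseRange d)
    (hconv : ∀ i, d i ∈ D → ∃ a, Tendsto (fun j => F j (d i)) atTop (𝓝 a))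
    {K : Set (Fin m → ℂ)} (hKD : K ⊆ D) (hK : IsCompact K) :
    UniformCauchySeqOn F atTop K := by
  rw [Metric.uniformCauchySeqOn_iff]
  intro ε hε
  have claim : ∀ x ∈ K, ∃ δ > 0, ∃ N : ℕ, ∀ a ≥ N, ∀ b ≥ N, ∀ y ∈ ball x δ,
      dist (F a y) (F b y) < ε := by
    intro x hx
    obtain ⟨r, hr, hrD, C, hC0, hlipx⟩ := hlip x (hKD hx)
    set δ : ℝ := min (r/4) (ε/(8*(C+1))) with hδdef
    have hδ0 : 0 < δ := lt_min (by linarith) (by positivity)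
    have hδr : ball x δ ⊆ ball x r := ball_subset_ball (by
      calc δ ≤ r/4 := min_le_left _ _
        _ ≤ r := by linarith)
    obtain ⟨i, hi⟩ := hd.exists_mem_open isOpen_ball ⟨x, mem_ball_self hδ0⟩
    have hiD : d i ∈ D := hrD (hδr hi)
    obtain ⟨a, ha⟩ := hconv i hiD
    obtain ⟨N, hN⟩ := Metric.cauchySeq_iff.mp ha.cauchySeq (ε/2) (by linarith)
    refine ⟨δ, hδ0, N, fun a' ha' b hb y hy => ?_⟩
    have hkey : ∀ c : ℕ, ‖F c y - F c (d i)‖ ≤ ε/4 := by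
      intro c
      calc ‖F c y - F c (d i)‖ ≤ C * ‖y - d i‖ :=
            hlipx c y (hδr hy) (d i) (hδr hi)
        _ ≤ C * (2*δ) := by
            apply mul_le_mul_of_nonneg_left _ hC0
            calc ‖y - d i‖ = dist y (d i) := (dist_eq_norm _ _).symm
              _ ≤ dist y x + dist x (d i) := dist_triangle _ _ _
              _ ≤ δ + δ := by
                  rw [dist_comm x (d i)]
                  exact add_le_add (mem_ball.mp hy).le (mem_ball.mp hi).le
              _ = 2*δ := by ring
        _ ≤ C * (2*(ε/(8*(C+1)))) := by
            apply mul_le_mul_of_nonneg_left _ hC0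
            have := min_le_right (r/4) (ε/(8*(C+1)))
            linarith
        _ = (C/(C+1)) * (ε/4) := by field_simp; ring
        _ ≤ 1 * (ε/4) := by
            apply mul_le_mul_of_nonneg_right _ (by linarith)
            rw [div_le_one (by linarith)]; linarith
        _ = ε/4 := one_mul _
    calc dist (F a' y) (F b y) ≤ dist (F a' y) (F a' (d i)) + dist (F a' (d i)) (F b (d i))
          + dist (F b (d i)) (F b y) := dist_triangle4 _ _ _ _
      _ < ε/4 + ε/2 + ε/4 := by
          have h1 : dist (F a' y) (F a' (d i)) ≤ ε/4 := by
            rw [dist_eq_norm]; exact hkey a'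
          have h2 : dist (F b (d i)) (F b y) ≤ ε/4 := by
            rw [dist_comm, dist_eq_norm]; exact hkey b
          have h3 := hN a' ha' b hb
          linarith
      _ = ε := by ring
  choose! δ hδ0 N hN using claim
  obtain ⟨t, htK, htcov⟩ := hK.elim_nhds_subcover (fun x => ball x (δ x))
    (fun x hx => ball_mem_nhds x (hδ0 x hx))
  set N₀ : ℕ := t.sup N with hN₀
  refine ⟨N₀, fun a ha b hb y hy => ?_⟩
  obtain ⟨x, hxt, hyx⟩ := mem_iUnion₂.mp (htcov hy)
  exact hN x (htK x hxt) a (le_trans (Finset.le_sup hxt) ha) b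
    (le_trans (Finset.le_sup hxt) hb) y hyx

lemma diff_limit {n m : ℕ} {D : Set (Fin m → ℂ)} (hDopen : IsOpen D)
    {H : ℕ → (Fin m → ℂ) → (Fin n → ℂ)} (hHd : ∀ j, DifferentiableOn ℂ (H j) D)
    {g : (Fin m → ℂ) → (Fin n → ℂ)}
    (hgp : ∀ x ∈ D, Tendsto (fun k => H k x) atTop (𝓝 (g x)))
    (hCauchy : ∀ K : Set (Fin m → ℂ), K ⊆ D → IsCompact K → UniformCauchySeqOn H atTop K) :
    DifferentiableOn ℂ g D := by
  intro p hp
  obtain ⟨ε, hε, hballD⟩ := Metric.isOpen_iff.mp hDopen p hp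
  set ρ : ℝ := ε/4 with hρdef
  have hρ0 : 0 < ρ := by positivity
  have hKD : closedBall p (2*ρ) ⊆ D := by
    intro x hx
    apply hballD
    rw [mem_closedBall] at hx
    rw [mem_ball]
    calc dist x p ≤ 2*ρ := hx
      _ < ε := by rw [hρdef]; linarith
  have hUC := hCauchy _ hKD (isCompact_closedBall _ _)
  rw [Metric.uniformCauchySeqOn_iff] at hUC
  have hballsub : ball p ρ ⊆ D := fun x hx =>
    hKD (ball_subset_closedBall (ball_subset_ball (by linarith) hx))
  have hdiffat : ∀ k, ∀ x ∈ ball p ρ, DifferentiableAt ℂ (H k) x := fun k x hx =>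
    (hHd k x (hballsub hx)).differentiableAt (hDopen.mem_nhds (hballsub hx))
  -- metric-form uniform Cauchy for the derivatives
  have hM : ∀ ε' > (0:ℝ), ∃ N : ℕ, ∀ a ≥ N, ∀ b ≥ N, ∀ q' ∈ ball p ρ,
      dist (fderiv ℂ (H a) q') (fderiv ℂ (H b) q') < ε' := by
    intro ε' hε'
    obtain ⟨N, hN⟩ := hUC (ρ*ε'/4) (by positivity)
    refine ⟨N, fun a ha b hb q' hq' => ?_⟩
    set u : (Fin m → ℂ) → (Fin n → ℂ) := fun x => H a x - H b x with hu
    have hsubK : ball q' ρ ⊆ closedBall p (2*ρ) := by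
      intro x hx
      rw [mem_ball] at hx hq'
      rw [mem_closedBall]
      calc dist x p ≤ dist x q' + dist q' p := dist_triangle _ _ _
        _ ≤ ρ + ρ := add_le_add hx.le hq'.le
        _ = 2*ρ := by ring
    have hsubD : ball q' ρ ⊆ D := hsubK.trans hKD
    have hud : DifferentiableOn ℂ u (ball q' ρ) :=
      ((hHd a).mono hsubD).sub ((hHd b).mono hsubD)
    have hmaps : MapsTo u (ball q' ρ) (ball (u q') (ρ*ε'*3/4)) := by
      intro x hx
      rw [mem_ball, dist_eq_norm]
      have h1 : dist (H a x) (H b x) < ρ*ε'/4 := hN a ha b hb x (hsubK hx)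
      have h2 : dist (H a q') (H b q') < ρ*ε'/4 :=
        hN a ha b hb q' (hsubK (mem_ball_self hρ0))
      calc ‖u x - u q'‖ ≤ ‖H a x - H b x‖ + ‖H a q' - H b q'‖ := norm_sub_le _ _
        _ < ρ*ε'/4 + ρ*ε'/4 := by
            rw [dist_eq_norm] at h1 h2
            exact add_lt_add h1 h2
        _ ≤ ρ*ε'*3/4 := by nlinarith
    have hfb := fderiv_bound hρ0 hud hmaps
    have hsplit : fderiv ℂ u q' = fderiv ℂ (H a) q' - fderiv ℂ (H b) q' := by
      rw [hu]
      exact fderiv_fun_sub (hdiffat a q' hq') (hdiffat b q' hq')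
    rw [dist_eq_norm, ← hsplit]
    calc ‖fderiv ℂ u q'‖ ≤ ρ*ε'*3/4/ρ := hfb
      _ = 3*ε'/4 := by field_simp
      _ < ε' := by linarith
  have hUC' : UniformCauchySeqOn (fun k => fderiv ℂ (H k)) atTop (ball p ρ) := by
    rw [Metric.uniformCauchySeqOn_iff]; exact hM
  have hptw : ∀ x ∈ ball p ρ, CauchySeq (fun k => fderiv ℂ (H k) x) := by
    intro x hx
    rw [Metric.cauchySeq_iff]
    intro ε' hε'
    obtain ⟨N, hN⟩ := hM ε' hε'
    exact ⟨N, fun a ha b hb => hN a ha b hb x hx⟩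
  set g' : (Fin m → ℂ) → ((Fin m → ℂ) →L[ℂ] (Fin n → ℂ)) :=
    fun x => limUnder atTop (fun k => fderiv ℂ (H k) x) with hg'
  have hg'tend : ∀ x ∈ ball p ρ, Tendsto (fun k => fderiv ℂ (H k) x) atTop (𝓝 (g' x)) :=
    fun x hx => (hptw x hx).tendsto_limUnder
  have hTU' : TendstoUniformlyOn (fun k => fderiv ℂ (H k)) g' atTop (ball p ρ) :=
    hUC'.tendstoUniformlyOn_of_tendsto hg'tend
  have hres : HasFDerivAt g (g' p) p :=
    hasFDerivAt_of_tendstoUniformlyOn isOpen_ball hTU'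
      (fun k x hx => (hdiffat k x hx).hasFDerivAt)
      (fun x hx => hgp x (hballsub hx)) (mem_ball_self hρ0)
  exact hres.differentiableAt.differentiableWithinAt

end Auxiliary

/-- If a domain `G ⊆ ℂ^n` is taut, i.e. `𝒪(Δ, G)` is a normal family where `Δ ⊆ ℂ` is the
open unit disc, then for every `m ≥ 1` and every domain `D ⊆ ℂ^m`, the family `𝒪(D, G)` is
a normal family. -/
theorem normal_family_of_taut {n : ℕ} (G : Set (Fin n → ℂ))
    (hGopen : IsOpen G) (hGconn : IsConnected G)
    (htaut : IsNormalFamilyO (Metric.ball (0 : ℂ) 1) G) :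
    ∀ m : ℕ, 1 ≤ m → ∀ D : Set (Fin m → ℂ), IsOpen D → IsConnected D →
      IsNormalFamilyO D G := by
  classical
  intro m hm D hDopen hDconn f hf
  have hfd : ∀ j, DifferentiableOn ℂ (f j) D := fun j => (hf j).1
  have hfm : ∀ j, Set.MapsTo (f j) D G := fun j => (hf j).2
  obtain ⟨KD, hKDmono, hKDcomp, hKDsub, hKDabs⟩ := exists_exhaustion D hDopen
  obtain ⟨LG, hLGmono, hLGcomp, hLGsub, hLGabs⟩ := exists_exhaustion G hGopen
  set S : ℕ → Set ℕ := fun i => {j | Disjoint (f j '' KD i) (LG i)} with hS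
  by_cases hinf : ∀ i, (S i).Infinite
  · obtain ⟨φ, hφ, hφS⟩ := subseq_select hinf
    refine ⟨φ, hφ, Or.inr ?_⟩
    intro K hKsub hKc L hLsub hLc
    obtain ⟨iK, hiK⟩ := hKDabs K hKsub hKc
    obtain ⟨iL, hiL⟩ := hLGabs L hLsub hLc
    refine ⟨max iK iL, fun k hk => ?_⟩
    have h1 : Disjoint (f (φ k) '' KD k) (LG k) := hφS k
    exact h1.mono (Set.image_mono (hiK.trans (hKDmono ((le_max_left _ _).trans hk))))
      (hiL.trans (hLGmono ((le_max_right _ _).trans hk)))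
  · push_neg at hinf
    obtain ⟨i₀, hfin⟩ := hinf
    obtain ⟨j₁, hj₁⟩ := hfin.bddAbove
    have hnd : ∀ k : ℕ, ∃ x ∈ KD i₀, f (k + (j₁+1)) x ∈ LG i₀ := by
      intro k
      have hnot : (k + (j₁+1)) ∉ S i₀ := fun hmem => by
        have := hj₁ hmem; omega
      rw [hS] at hnot
      simp only [Set.mem_setOf_eq] at hnot
      rw [Set.not_disjoint_iff] at hnot
      obtain ⟨y, ⟨x, hx, rfl⟩, hy2⟩ := hnot
      exact ⟨x, hx, hy2⟩
    choose x hxK hxL using hnd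
    obtain ⟨xs, hxsK, ψ, hψ, hψtend⟩ := (hKDcomp i₀).tendsto_subseq hxK
    have oracle : ∀ L : Set (Fin n → ℂ), IsCompact L → L ⊆ G →
        ∃ L', IsCompact L' ∧ L' ⊆ G ∧
          ∀ (f' : (Fin m → ℂ) → (Fin n → ℂ)) (p : Fin m → ℂ) (R : ℝ), 0 < R →
            DifferentiableOn ℂ f' (Metric.ball p R) → Set.MapsTo f' (Metric.ball p R) G →
            f' p ∈ L → ∀ q ∈ Metric.closedBall p (R/2), f' q ∈ L' := by
      intro L hLc hLsubG
      obtain ⟨L', h1, h2, h3⟩ := lemA hGopen htaut L hLc hLsubG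
      exact ⟨L', h1, h2, fun f' p R hR h4 h5 h6 => ballBound h3 f' p hR h4 h5 h6⟩
    obtain ⟨δ, hδ0, hδ⟩ := (hKDcomp i₀).exists_cthickening_subset_open hDopen (hKDsub i₀)
    obtain ⟨L', hL'c, hL'G, hor⟩ := oracle (LG i₀) (hLGcomp i₀) (hLGsub i₀)
    obtain ⟨k₀, hk₀⟩ := Metric.tendsto_atTop.mp hψtend (δ/4) (by linarith)
    set φT : ℕ → ℕ := fun k => ψ (k + k₀) + (j₁+1) with hφT
    have hφTmono : StrictMono φT := by
      intro a b hab
      have := hψ (show a + k₀ < b + k₀ by omega)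
      simp only [hφT]
      omega
    set F : ℕ → (Fin m → ℂ) → (Fin n → ℂ) := fun k => f (φT k) with hF
    have hFd : ∀ j, DifferentiableOn ℂ (F j) D := fun j => hfd _
    have hFm : ∀ j, Set.MapsTo (F j) D G := fun j => hfm _
    have hxsD : xs ∈ D := hKDsub i₀ hxsK
    have hseed : ∀ k, F k xs ∈ L' := by
      intro k
      set pk := x (ψ (k + k₀)) with hpk
      have hpkK : pk ∈ KD i₀ := hxK _
      have hballpk : Metric.ball pk δ ⊆ D := fun y hy => hδ
        (Metric.mem_cthickening_of_dist_le y pk δ _ hpkK (Metric.mem_ball.mp hy).le)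
      have hcenter : F k pk ∈ LG i₀ := hxL (ψ (k + k₀))
      refine hor (F k) pk δ hδ0 ((hFd k).mono hballpk) ((hFm k).mono_left hballpk)
        hcenter xs ?_
      rw [Metric.mem_closedBall, dist_comm]
      have := hk₀ (k + k₀) (by omega)
      calc dist pk xs ≤ δ/4 := this.le
        _ ≤ δ/2 := by linarith
    have hU := local_bound hDopen hDconn oracle F hFd hFm xs hxsD L' hL'c hL'G hseed
    have hloc : ∀ p ∈ D, ∃ r > 0, Metric.ball p r ⊆ D ∧
        (∃ L'', IsCompact L'' ∧ L'' ⊆ G ∧ ∀ j, ∀ q ∈ Metric.ball p r, F j q ∈ L'') ∧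
        ∃ C ≥ (0:ℝ), ∀ j, ∀ q ∈ Metric.ball p r, ∀ q' ∈ Metric.ball p r,
          ‖F j q - F j q'‖ ≤ C * ‖q - q'‖ := by
      intro p hp
      obtain ⟨r, hr, hrD, L'', hc, hG2, hbd⟩ := hU p hp
      obtain ⟨C, hC0, hlip⟩ := lip_local hDopen hFd hr hrD hc hbd
      refine ⟨r/2, by linarith, (Metric.ball_subset_ball (by linarith)).trans hrD,
        ⟨L'', hc, hG2, fun j q hq => hbd j q (Metric.ball_subset_ball (by linarith) hq)⟩,
        C, hC0, hlip⟩
    set d : ℕ → (Fin m → ℂ) := TopologicalSpace.denseSeq (Fin m → ℂ) with hd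
    have hdr : DenseRange d := TopologicalSpace.denseRange_denseSeq _
    have hdiagh : ∀ i, d i ∈ D → ∀ u : ℕ → ℕ, StrictMono u →
        ∃ v : ℕ → ℕ, StrictMono v ∧ ∃ a : Fin n → ℂ,
          Tendsto (fun k => (fun i j => F j (d i)) i (u (v k))) atTop (𝓝 a) := by
      intro i hi u hu
      obtain ⟨r, hr, hrD, ⟨L'', hc, hG2, hbd⟩, _⟩ := hloc (d i) hi
      have hv : ∀ k, F (u k) (d i) ∈ L'' := fun k => hbd (u k) (d i) (Metric.mem_ball_self hr)
      obtain ⟨a, _, v, hv1, hv2⟩ := hc.tendsto_subseq hv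
      exact ⟨v, hv1, a, hv2⟩
    obtain ⟨θ, hθ, hθconv⟩ := diag_extract (fun i j => F j (d i)) (fun i => d i ∈ D) hdiagh
    set H : ℕ → (Fin m → ℂ) → (Fin n → ℂ) := fun k => F (θ k) with hH
    have hHd : ∀ j, DifferentiableOn ℂ (H j) D := fun j => hFd _
    have hHlip : ∀ p ∈ D, ∃ r > 0, Metric.ball p r ⊆ D ∧ ∃ C ≥ (0:ℝ), ∀ j,
        ∀ q ∈ Metric.ball p r, ∀ q' ∈ Metric.ball p r, ‖H j q - H j q'‖ ≤ C * ‖q - q'‖ := by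
      intro p hp
      obtain ⟨r, hr, hrD, _, C, hC0, hlip⟩ := hloc p hp
      exact ⟨r, hr, hrD, C, hC0, fun j => hlip (θ j)⟩
    have hHconv : ∀ i, d i ∈ D → ∃ a, Tendsto (fun j => H j (d i)) atTop (𝓝 a) := hθconv
    have hCauchy : ∀ K : Set (Fin m → ℂ), K ⊆ D → IsCompact K →
        UniformCauchySeqOn H atTop K :=
      fun K h1 h2 => unif_cauchy hHlip hdr hHconv h1 h2
    set g : (Fin m → ℂ) → (Fin n → ℂ) := fun x => limUnder atTop (fun k => H k x) with hg
    have hgp : ∀ x ∈ D, Tendsto (fun k => H k x) atTop (𝓝 (g x)) := by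
      intro x hx
      have hcs : CauchySeq (fun k => H k x) := by
        have huc := hCauchy {x} (Set.singleton_subset_iff.2 hx) isCompact_singleton
        rw [Metric.uniformCauchySeqOn_iff] at huc
        rw [Metric.cauchySeq_iff]
        intro ε hε
        obtain ⟨N, hN⟩ := huc ε hε
        exact ⟨N, fun a ha b hb => hN a ha b hb x rfl⟩
      exact hcs.tendsto_limUnder
    refine ⟨fun k => φT (θ k), hφTmono.comp hθ, Or.inl ⟨g, ?_, ?_, ?_⟩⟩
    · exact diff_limit hDopen hHd hgp hCauchy
    · intro x hx
      obtain ⟨r, hr, hrD, ⟨L'', hc, hG2, hbd⟩, _⟩ := hloc x hx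
      have hmem : g x ∈ L'' := hc.isClosed.mem_of_tendsto (hgp x hx)
        (Filter.Eventually.of_forall (fun k => hbd (θ k) x (Metric.mem_ball_self hr)))
      exact hG2 hmem
    · intro K hKsub hKc
      exact (hCauchy K hKsub hKc).tendstoUniformlyOn_of_tendsto
        (fun x hx => hgp x (hKsub hx))
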